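/- arXiv:2111.09217 — 2 statements merged into one kernel-verified Lean document; each statement's English description precedes it below -/
import Mathlib

section
/- In a line network with N nodes under a stationary randomized policy where link e_j is successfully activated i.i.d. each slot with probability α_j = γ_{e_j} f_{e_j} > 0, the expected age at the destination node N satisfies lim_{t→∞} E[A_N(t)] = Σ_{j=2}^{N} 1/(γ_{e_j} f_{e_j}). -/
open MeasureTheory ProbabilityTheory Filter

lemma contraction_tendsto_zero {c : ℝ} (hc0 : 0 ≤ c) (hc1 : c < 1) {u d : ℕ → ℝ}
    (hd : Tendsto d atTop (nhds 0)) (hu : ∀ t, u (t + 1) = c * u t + d t) :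
    Tendsto u atTop (nhds 0) := by
  rw [Metric.tendsto_atTop] at hd ⊢
  intro ε hε
  have h1c : 0 < 1 - c := by linarith
  have hε' : 0 < ε * (1 - c) / 2 := by positivity
  obtain ⟨T, hT⟩ := hd _ hε'
  have hkey : ∀ n, |u (T + n)| ≤ c ^ n * |u T| + ε / 2 := by
    intro n
    induction n with
    | zero =>
      simp only [Nat.add_zero, pow_zero, one_mul]
      linarith [abs_nonneg (u T), hε.le]
    | succ n ih =>
      have hd' : |d (T + n)| ≤ ε * (1 - c) / 2 := by
        have := hT (T + n) (Nat.le_add_right T n)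
        rw [Real.dist_eq, sub_zero] at this
        linarith
      calc |u (T + (n + 1))| = |c * u (T + n) + d (T + n)| := by
            rw [show T + (n + 1) = (T + n) + 1 by ring, hu]
        _ ≤ |c * u (T + n)| + |d (T + n)| := abs_add_le _ _
        _ = c * |u (T + n)| + |d (T + n)| := by rw [abs_mul, abs_of_nonneg hc0]
        _ ≤ c * (c ^ n * |u T| + ε / 2) + ε * (1 - c) / 2 := by
            have := mul_le_mul_of_nonneg_left ih hc0
            linarith
        _ ≤ c ^ (n + 1) * |u T| + ε / 2 := by
            rw [pow_succ]
            nlinarith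
  have hpow : Tendsto (fun n => c ^ n * |u T|) atTop (nhds 0) := by
    simpa using (tendsto_pow_atTop_nhds_zero_of_lt_one hc0 hc1).mul_const |u T|
  rw [Metric.tendsto_atTop] at hpow
  obtain ⟨n0, hn0⟩ := hpow (ε / 2) (by positivity)
  refine ⟨T + n0, fun n hn => ?_⟩
  rw [Real.dist_eq, sub_zero]
  have h1 : |u (T + (n - T))| ≤ c ^ (n - T) * |u T| + ε / 2 := hkey (n - T)
  have h2 : dist (c ^ (n - T) * |u T|) 0 < ε / 2 := hn0 (n - T) (by omega)
  rw [Real.dist_eq, sub_zero] at h2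
  rw [abs_of_nonneg (by positivity : (0:ℝ) ≤ c ^ (n - T) * |u T|)] at h2
  have h4 : T + (n - T) = n := by omega
  rw [h4] at h1
  linarith

/-- In a line network with N nodes under a stationary randomized policy
where link e_j = (j-1,j) is successfully activated i.i.d. each slot with probability
γ_j f_j > 0, the expected age at the destination node N satisfies
lim_{t→∞} E[A_N(t)] = Σ_{j=2}^{N} 1/(γ_j f_j). -/
theorem line_network_expected_age_limit {Ω : Type*} [MeasurableSpace Ω]
    (μ : Measure Ω) [IsProbabilityMeasure μ]
    (N : ℕ) (hN : 2 ≤ N) (γ f : ℕ → ℝ)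
    (S : ℕ → ℕ → Ω → Bool)  -- S j t ω : success on link e_j at time t
    (A : ℕ → ℕ → Ω → ℝ)     -- A j t ω : age at node j at time t
    (hαpos : ∀ j ∈ Finset.Icc 2 N, 0 < γ j * f j ∧ γ j * f j ≤ 1)
    (hSm : ∀ j t, Measurable (S j t))
    (hSprob : ∀ j ∈ Finset.Icc 2 N, ∀ t,
      μ {ω | S j t ω = true} = ENNReal.ofReal (γ j * f j))
    (hSindep : iIndepFun (m := fun _ : ℕ × ℕ => (inferInstance : MeasurableSpace Bool))
      (fun p ω => S p.1 p.2 ω) μ)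
    (hsource : ∀ t ω, A 1 t ω = 0)
    (hinit : ∀ j ω, A j 0 ω = 0)
    (hevol : ∀ j ∈ Finset.Icc 2 N, ∀ t ω,
      A j (t + 1) ω = if S j t ω then A (j - 1) t ω + 1 else A j t ω + 1) :
    Tendsto (fun t : ℕ => ∫ ω, A N t ω ∂μ) atTop
      (nhds (∑ j ∈ Finset.Icc 2 N, 1 / (γ j * f j))) := by
  classical
  set m : ℕ × ℕ → MeasurableSpace Ω :=
    fun p => MeasurableSpace.comap (fun ω => S p.1 p.2 ω)
      (inferInstance : MeasurableSpace Bool) with hmdef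
  have hm_le : ∀ p : ℕ × ℕ, m p ≤ ‹MeasurableSpace Ω› :=
    fun p => measurable_iff_comap_le.mp (hSm p.1 p.2)
  set M : ℕ → MeasurableSpace Ω :=
    fun t => ⨆ p ∈ {p : ℕ × ℕ | p.2 < t}, m p with hMdef
  have hM_le : ∀ t, M t ≤ ‹MeasurableSpace Ω› := fun t => iSup₂_le fun p _ => hm_le p
  have hM_mono : ∀ {t t' : ℕ}, t ≤ t' → M t ≤ M t' :=
    fun h => biSup_mono fun p hp => lt_of_lt_of_le hp h
  have hSMmeas : ∀ j t t', t < t' → Measurable[M t'] (S j t) := by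
    intro j t t' h
    have h1 : Measurable[m (j, t)] (S j t) := measurable_iff_comap_le.mpr le_rfl
    exact h1.mono (le_iSup₂ (f := fun p (_ : p ∈ {p : ℕ × ℕ | p.2 < t'}) => m p) (j, t) h) le_rfl
  -- measurability of ages w.r.t. the filtration
  have hAmeas : ∀ t j, 1 ≤ j → j ≤ N → Measurable[M t] (A j t) := by
    intro t
    induction t with
    | zero =>
      intro j _ _
      have : A j 0 = fun _ => (0 : ℝ) := funext (hinit j)
      rw [this]; exact measurable_const
    | succ t ih =>
      intro j h1 h2
      rcases eq_or_lt_of_le h1 with h | h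
      · have : A j (t + 1) = fun _ => (0 : ℝ) := funext fun ω => by rw [← h]; exact hsource _ ω
        rw [this]; exact measurable_const
      · have hj : j ∈ Finset.Icc 2 N := Finset.mem_Icc.mpr ⟨h, h2⟩
        have hfun : A j (t + 1) = fun ω => if S j t ω then A (j - 1) t ω + 1 else A j t ω + 1 :=
          funext fun ω => hevol j hj t ω
        rw [hfun]
        have h1' : Measurable[M (t + 1)] (A (j - 1) t) :=
          (ih (j - 1) (by omega) (by omega)).mono (hM_mono (Nat.le_succ t)) le_rfl
        have h2' : Measurable[M (t + 1)] (A j t) :=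
          (ih j h1 h2).mono (hM_mono (Nat.le_succ t)) le_rfl
        have hS' : Measurable[M (t + 1)] (S j t) := hSMmeas j t (t + 1) (Nat.lt_succ_self t)
        exact Measurable.ite (hS' (MeasurableSet.singleton true))
          (h1'.add_const 1) (h2'.add_const 1)
  have hAm : ∀ t j, 1 ≤ j → j ≤ N → Measurable (A j t) :=
    fun t j h1 h2 => (hAmeas t j h1 h2).mono (hM_le t) le_rfl
  -- bounds on ages
  have hAbd : ∀ t j, 1 ≤ j → j ≤ N → ∀ ω, 0 ≤ A j t ω ∧ A j t ω ≤ t := by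
    intro t
    induction t with
    | zero => intro j _ _ ω; rw [hinit]; norm_num
    | succ t ih =>
      intro j h1 h2 ω
      rcases eq_or_lt_of_le h1 with h | h
      · rw [← h, hsource]
        refine ⟨le_refl 0, by positivity⟩
      · rw [hevol j (Finset.mem_Icc.mpr ⟨h, h2⟩) t ω]
        by_cases hs : S j t ω <;> simp only [hs, if_true, if_false, Bool.false_eq_true]
        · obtain ⟨ha, hb⟩ := ih (j - 1) (by omega) (by omega) ω
          push_cast
          constructor <;> linarith
        · obtain ⟨ha, hb⟩ := ih j h1 h2 ω
          push_cast
          constructor <;> linarith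
  -- integrability
  have hAint : ∀ t j, 1 ≤ j → j ≤ N → Integrable (A j t) μ := by
    intro t j h1 h2
    refine ⟨(hAm t j h1 h2).aestronglyMeasurable,
      HasFiniteIntegral.of_bounded (C := t) (ae_of_all μ fun ω => ?_)⟩
    rw [Real.norm_eq_abs, abs_of_nonneg (hAbd t j h1 h2 ω).1]
    exact (hAbd t j h1 h2 ω).2
  -- independence of the filtration with current successes
  have hIndepM : ∀ j t, Indep (M t) (m (j, t)) μ := by
    intro j t
    have hdisj : Disjoint {p : ℕ × ℕ | p.2 < t} ({(j, t)} : Set (ℕ × ℕ)) := by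
      rw [Set.disjoint_left]
      rintro p hp rfl
      exact absurd hp (lt_irrefl t)
    have h := indep_iSup_of_disjoint (m := m) hm_le hSindep hdisj
    simp only [hMdef]
    simpa using h
  have hIndepF : ∀ t j k, 1 ≤ k → k ≤ N → IndepFun (A k t) (S j t) μ := by
    intro t j k h1 h2
    exact indep_of_indep_of_le_left (hIndepM j t)
      (measurable_iff_comap_le.mp (hAmeas t k h1 h2))
  -- the recurrence on expected ages
  have hrec : ∀ j, 2 ≤ j → j ≤ N → ∀ t,
      ∫ ω, A j (t + 1) ω ∂μ =
        (γ j * f j) * ((∫ ω, A (j - 1) t ω ∂μ) + 1)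
          + (1 - γ j * f j) * ((∫ ω, A j t ω ∂μ) + 1) := by
    intro j h2 hN' t
    have hj : j ∈ Finset.Icc 2 N := Finset.mem_Icc.mpr ⟨h2, hN'⟩
    obtain ⟨hα0, hα1⟩ := hαpos j hj
    set X : Ω → ℝ := fun ω => if S j t ω then (1 : ℝ) else 0 with hXdef
    have hψ : Measurable (fun b : Bool => if b then (1 : ℝ) else 0) := Measurable.of_discrete
    have hψ' : Measurable (fun b : Bool => 1 - (if b then (1 : ℝ) else 0)) :=
      Measurable.of_discrete
    have hXmeas : Measurable X := hψ.comp (hSm j t)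
    have hXbd : ∀ ω, ‖X ω‖ ≤ 1 := by
      intro ω; by_cases h : S j t ω <;> simp [hXdef, h]
    have hXint : Integrable X μ :=
      ⟨hXmeas.aestronglyMeasurable, HasFiniteIntegral.of_bounded (C := 1) (ae_of_all μ hXbd)⟩
    have hXval : ∫ ω, X ω ∂μ = γ j * f j := by
      have hs : MeasurableSet {ω | S j t ω = true} := hSm j t (MeasurableSet.singleton true)
      have hXind : X = Set.indicator {ω | S j t ω = true} (fun _ => (1 : ℝ)) := by
        funext ω
        by_cases h : S j t ω = true <;> simp [hXdef, h, Set.indicator]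
      rw [hXind, integral_indicator_const (1 : ℝ) hs, measureReal_def, hSprob j hj t, smul_eq_mul, mul_one,
        ENNReal.toReal_ofReal hα0.le]
    have hsplit : ∀ ω,
        A j (t + 1) ω = (A (j - 1) t ω + 1) * X ω + (A j t ω + 1) * (1 - X ω) := by
      intro ω
      rw [hevol j hj t ω]
      by_cases h : S j t ω <;> simp [hXdef, h]
    -- integrability of the pieces
    have hI1 : Integrable (fun ω => (A (j - 1) t ω + 1) * X ω) μ := by
      refine ⟨(((hAm t (j - 1) (by omega) (by omega)).add_const 1).mul
        hXmeas).aestronglyMeasurable,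
        HasFiniteIntegral.of_bounded (C := (t : ℝ) + 1) (ae_of_all μ fun ω => ?_)⟩
      obtain ⟨ha, hb⟩ := hAbd t (j - 1) (by omega) (by omega) ω
      rw [Real.norm_eq_abs, abs_mul]
      have h1 : |A (j - 1) t ω + 1| ≤ (t : ℝ) + 1 := by rw [abs_of_nonneg] <;> linarith
      have h2 : |X ω| ≤ 1 := hXbd ω
      nlinarith [abs_nonneg (A (j - 1) t ω + 1), abs_nonneg (X ω)]
    have hI2 : Integrable (fun ω => (A j t ω + 1) * (1 - X ω)) μ := by
      refine ⟨(((hAm t j (by omega) hN').add_const 1).mul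
        (measurable_const.sub hXmeas)).aestronglyMeasurable,
        HasFiniteIntegral.of_bounded (C := ((t : ℝ) + 1) * 2) (ae_of_all μ fun ω => ?_)⟩
      obtain ⟨ha, hb⟩ := hAbd t j (by omega) hN' ω
      rw [Real.norm_eq_abs, abs_mul]
      have h1 : |A j t ω + 1| ≤ (t : ℝ) + 1 := by rw [abs_of_nonneg] <;> linarith
      have h2 : |1 - X ω| ≤ 2 := by
        have := hXbd ω; rw [Real.norm_eq_abs] at this
        rw [abs_sub_le_iff]
        constructor <;> cases abs_le.mp this <;> linarith
      nlinarith [abs_nonneg (A j t ω + 1), abs_nonneg (1 - X ω)]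
    -- independence of the pieces
    have hE1 : IndepFun (fun ω => A (j - 1) t ω + 1) X μ :=
      (hIndepF t j (j - 1) (by omega) (by omega)).comp
        (measurable_id.add_const (1 : ℝ)) hψ
    have hE2 : IndepFun (fun ω => A j t ω + 1) (fun ω => 1 - X ω) μ :=
      (hIndepF t j j (by omega) hN').comp (measurable_id.add_const (1 : ℝ)) hψ'
    have hprod1 : ∫ ω, (A (j - 1) t ω + 1) * X ω ∂μ =
        ((∫ ω, A (j - 1) t ω ∂μ) + 1) * (γ j * f j) := by
      have := hE1.integral_fun_mul_eq_mul_integral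
        (((hAm t (j - 1) (by omega) (by omega)).add_const 1).aestronglyMeasurable)
        hXmeas.aestronglyMeasurable
      have heq : ∫ ω, (fun ω => A (j - 1) t ω + 1) ω * X ω ∂μ =
          (∫ ω, (A (j - 1) t ω + 1) ∂μ) * ∫ ω, X ω ∂μ := this
      rw [show (fun ω => (A (j - 1) t ω + 1) * X ω) = fun ω => (fun ω => A (j - 1) t ω + 1) ω * X ω from rfl]
      rw [heq, hXval, integral_add (hAint t (j - 1) (by omega) (by omega)) (integrable_const 1)]
      simp
    have hprod2 : ∫ ω, (A j t ω + 1) * (1 - X ω) ∂μ =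
        ((∫ ω, A j t ω ∂μ) + 1) * (1 - γ j * f j) := by
      have := hE2.integral_fun_mul_eq_mul_integral
        (((hAm t j (by omega) hN').add_const 1).aestronglyMeasurable)
        ((measurable_const.sub hXmeas).aestronglyMeasurable)
      have heq : ∫ ω, (fun ω => A j t ω + 1) ω * (fun ω => 1 - X ω) ω ∂μ =
          (∫ ω, (A j t ω + 1) ∂μ) * ∫ ω, (1 - X ω) ∂μ := this
      rw [show (fun ω => (A j t ω + 1) * (1 - X ω)) = fun ω => (fun ω => A j t ω + 1) ω * (fun ω => 1 - X ω) ω from rfl]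
      rw [heq, integral_sub (integrable_const 1) hXint, hXval,
        integral_add (hAint t j (by omega) hN') (integrable_const 1)]
      simp
    calc ∫ ω, A j (t + 1) ω ∂μ
        = ∫ ω, ((A (j - 1) t ω + 1) * X ω + (A j t ω + 1) * (1 - X ω)) ∂μ := by
          exact integral_congr_ae (ae_of_all μ hsplit)
      _ = (∫ ω, (A (j - 1) t ω + 1) * X ω ∂μ) + ∫ ω, (A j t ω + 1) * (1 - X ω) ∂μ :=
          integral_add hI1 hI2
      _ = ((∫ ω, A (j - 1) t ω ∂μ) + 1) * (γ j * f j)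
            + ((∫ ω, A j t ω ∂μ) + 1) * (1 - γ j * f j) := by rw [hprod1, hprod2]
      _ = (γ j * f j) * ((∫ ω, A (j - 1) t ω ∂μ) + 1)
            + (1 - γ j * f j) * ((∫ ω, A j t ω ∂μ) + 1) := by ring
  -- the limit, by induction on the node index
  have hlim : ∀ j, 1 ≤ j → j ≤ N →
      Tendsto (fun t => ∫ ω, A j t ω ∂μ) atTop
        (nhds (∑ k ∈ Finset.Icc 2 j, 1 / (γ k * f k))) := by
    intro j
    induction j with
    | zero => intro h1 _; exact absurd h1 (by omega)
    | succ j ih =>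
      intro h1 h2
      rcases eq_or_lt_of_le h1 with h | h
      · -- j + 1 = 1
        have hj0 : j = 0 := by omega
        subst hj0
        have hz : (fun t => ∫ ω, A 1 t ω ∂μ) = fun _ => (0 : ℝ) := by
          funext t
          have : A 1 t = fun _ => (0 : ℝ) := funext (hsource t)
          rw [this]; simp
        rw [hz]
        have : Finset.Icc 2 1 = (∅ : Finset ℕ) := Finset.Icc_eq_empty (by omega)
        rw [this, Finset.sum_empty]
        exact tendsto_const_nhds
      · -- 2 ≤ j + 1
        have h2j : 2 ≤ j + 1 := h
        have hIH := ih (by omega) (by omega)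
        obtain ⟨hα0, hα1⟩ := hαpos (j + 1) (Finset.mem_Icc.mpr ⟨h2j, h2⟩)
        set αj : ℝ := γ (j + 1) * f (j + 1) with hαjdef
        set L' : ℝ := ∑ k ∈ Finset.Icc 2 j, 1 / (γ k * f k) with hL'def
        have hLsum : ∑ k ∈ Finset.Icc 2 (j + 1), 1 / (γ k * f k) = L' + 1 / αj :=
          Finset.sum_Icc_succ_top h2j _
        set u : ℕ → ℝ := fun t => (∫ ω, A (j + 1) t ω ∂μ) - (L' + 1 / αj) with hudef
        set d : ℕ → ℝ := fun t => αj * ((∫ ω, A j t ω ∂μ) - L') with hddef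
        have hinv : αj * (1 / αj) = 1 := mul_one_div_cancel hα0.ne'
        have hrec' : ∀ t, u (t + 1) = (1 - αj) * u t + d t := by
          intro t
          have hr := hrec (j + 1) h2j h2 t
          rw [Nat.add_sub_cancel] at hr
          simp only [hudef, hddef]
          rw [hr]
          linear_combination -hinv
        have hdlim : Tendsto d atTop (nhds 0) := by
          have h0 : Tendsto (fun t => (∫ ω, A j t ω ∂μ) - L') atTop (nhds 0) := by
            have := hIH.sub_const L'
            simpa using this
          have := h0.const_mul αj
          simpa using this
        have humain : Tendsto u atTop (nhds 0) :=
          contraction_tendsto_zero (by linarith) (by linarith) hdlim hrec'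
        rw [hLsum]
        have := humain.add_const (L' + 1 / αj)
        simp only [hudef, sub_add_cancel, zero_add] at this
        exact this
  exact hlim N (by omega) le_rfl
end

section
/- Suppose for each source-destination pair (k,j) the effective age process B_j^k(t) is bounded: 0 ≤ B_j^k(t) ≤ D for all t, and the debt queue evolves as Q_j^k(t+1) = [Q_j^k(t) + B_j^k(t+1) - α_j^k]^+ with Q_j^k(0) = 0. Then lim_{T→∞} E[Q_j^k(T)/T] = 0 holds if and only if lim sup_{T→∞} (1/T) Σ_{t=1}^T B_j^k(t) ≤ α_j^k almost surely (given suitable convergence of the time averages). In particular, a target vector α is age-achievable if and only if some feasible policy stabilizes all debt queues. -/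
open MeasureTheory Filter

lemma pathwise_tendsto (q f : ℕ → ℝ) (α L : ℝ)
    (hq0 : ∀ T, 0 ≤ q T)
    (hlin : ∀ T, ∃ s ≤ T, q T ≤ f T - f s)
    (hS : Tendsto (fun T : ℕ => f T / T + α) atTop (nhds L)) (hL : L ≤ α) :
    Tendsto (fun T : ℕ => q T / T) atTop (nhds 0) := by
  rw [Metric.tendsto_atTop]
  intro ε hε
  have hf : Tendsto (fun T : ℕ => f T / T) atTop (nhds (L - α)) := by
    have := hS.sub_const α
    simpa using this
  rw [Metric.tendsto_atTop] at hf
  obtain ⟨N1, hN1⟩ := hf (ε/8) (by linarith)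
  set N : ℕ := max N1 1 with hN
  have hub : ∀ n : ℕ, N ≤ n → f n ≤ n * (L - α + ε/8) := by
    intro n hn
    have hn1 : (1:ℕ) ≤ n := le_trans (le_max_right _ _) hn
    have hnp : (0:ℝ) < n := by exact_mod_cast hn1
    have := hN1 n (le_trans (le_max_left _ _) hn)
    rw [Real.dist_eq, abs_lt] at this
    have h2 : f n / n < (L - α) + ε/8 := by linarith [this.2]
    calc f n = (f n / n) * n := by field_simp
    _ ≤ ((L - α) + ε/8) * n := by nlinarith
    _ = n * (L - α + ε/8) := by ring
  have hlb : ∀ n : ℕ, N ≤ n → (n : ℝ) * (L - α - ε/8) ≤ f n := by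
    intro n hn
    have hn1 : (1:ℕ) ≤ n := le_trans (le_max_right _ _) hn
    have hnp : (0:ℝ) < n := by exact_mod_cast hn1
    have := hN1 n (le_trans (le_max_left _ _) hn)
    rw [Real.dist_eq, abs_lt] at this
    have h2 : (L - α) - ε/8 < f n / n := by linarith [this.1]
    calc (n:ℝ) * (L - α - ε/8) ≤ (f n / n) * n := by nlinarith
    _ = f n := by field_simp
  set C0 : ℝ := ∑ s ∈ Finset.range N, |f s| with hC0
  have hC0nn : 0 ≤ C0 := Finset.sum_nonneg fun _ _ => abs_nonneg _
  have hC0b : ∀ s < N, -C0 ≤ f s := by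
    intro s hs
    have : |f s| ≤ C0 := Finset.single_le_sum (f := fun s => |f s|)
      (fun _ _ => abs_nonneg _) (Finset.mem_range.mpr hs)
    have := neg_abs_le (f s)
    linarith
  have key : ∀ T : ℕ, N ≤ T → q T ≤ T * (ε/4) + C0 := by
    intro T hT
    obtain ⟨s, hsT, hq⟩ := hlin T
    have hTub := hub T hT
    have hTpos : (0:ℝ) < T := by
      have : (1:ℕ) ≤ T := le_trans (le_max_right _ _) hT
      exact_mod_cast this
    have hsc : (s:ℝ) ≤ T := by exact_mod_cast hsT
    by_cases hs : N ≤ s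
    · have hslb := hlb s hs
      have hsnn : (0:ℝ) ≤ s := Nat.cast_nonneg s
      nlinarith
    · push_neg at hs
      have := hC0b s hs
      nlinarith
  have hC0T : Tendsto (fun T : ℕ => C0 / T) atTop (nhds 0) :=
    tendsto_const_div_atTop_nhds_zero_nat C0
  rw [Metric.tendsto_atTop] at hC0T
  obtain ⟨N2, hN2⟩ := hC0T (ε/2) (by linarith)
  refine ⟨max N (max N2 1), fun n hn => ?_⟩
  have hnN : N ≤ n := le_trans (le_max_left _ _) hn
  have hn2 : N2 ≤ n := le_trans (le_trans (le_max_left _ _) (le_max_right _ _)) hn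
  have hn1 : (1:ℕ) ≤ n := le_trans (le_trans (le_max_right _ _) (le_max_right _ _)) hn
  have hnp : (0:ℝ) < n := by exact_mod_cast hn1
  have hk := key n hnN
  have hc := hN2 n hn2
  rw [Real.dist_eq, sub_zero, abs_of_nonneg (by positivity : (0:ℝ) ≤ C0 / n)] at hc
  rw [Real.dist_eq, sub_zero, abs_of_nonneg (div_nonneg (hq0 n) hnp.le)]
  have hqn : q n / n ≤ ε/4 + C0 / n := by
    rw [div_le_iff₀ hnp]
    calc q n ≤ n * (ε/4) + C0 := hk
    _ = (ε/4 + C0/n) * n := by field_simp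
  linarith

/-- For a bounded effective age process B(t) ∈ [0,D] and the debt queue
Q(t+1) = [Q(t) + B(t+1) - α]^+, Q(0) = 0, stability lim E[Q(T)]/T = 0 holds if and only
if limsup (1/T) Σ_{t=1}^T B(t) ≤ α almost surely, given a.s. convergence of the time
averages. Hence a target is age-achievable iff the debt queues can be stabilized. -/
theorem debt_stability_iff_age_achievable {Ω : Type*} [MeasurableSpace Ω]
    (μ : Measure Ω) [IsProbabilityMeasure μ]
    (D α : ℝ) (hD : 0 ≤ D)
    (B Q : ℕ → Ω → ℝ)
    (hB : ∀ t ω, 0 ≤ B t ω ∧ B t ω ≤ D)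
    (hBm : ∀ t, Measurable (B t))
    (hQ0 : ∀ ω, Q 0 ω = 0)
    (hQ : ∀ t ω, Q (t + 1) ω = max (Q t ω + B (t + 1) ω - α) 0)
    (hconv : ∀ᵐ ω ∂μ, ∃ L : ℝ,
      Tendsto (fun T : ℕ => (∑ t ∈ Finset.Icc 1 T, B t ω) / (T : ℝ)) atTop (nhds L)) :
    Tendsto (fun T : ℕ => (∫ ω, Q T ω ∂μ) / (T : ℝ)) atTop (nhds 0) ↔
      (∀ᵐ ω ∂μ,
        Filter.limsup (fun T : ℕ => (∑ t ∈ Finset.Icc 1 T, B t ω) / (T : ℝ)) atTop ≤ α) := by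
  set C : ℝ := max (D - α) 0 with hC
  have hCnn : 0 ≤ C := le_max_right _ _
  set S : ℕ → Ω → ℝ := fun T ω => ∑ t ∈ Finset.Icc 1 T, B t ω with hSdef
  -- measurability of Q
  have hQm : ∀ t, Measurable (Q t) := by
    intro t
    induction t with
    | zero =>
      have : Q 0 = fun _ => (0:ℝ) := funext hQ0
      rw [this]; exact measurable_const
    | succ t ih =>
      have : Q (t+1) = fun ω => max (Q t ω + B (t+1) ω - α) 0 := funext (hQ t)
      rw [this]
      exact ((ih.add (hBm (t+1))).sub measurable_const).max measurable_const
  -- nonnegativity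
  have hQnn : ∀ t ω, 0 ≤ Q t ω := by
    intro t ω
    cases t with
    | zero => rw [hQ0]
    | succ t => rw [hQ]; exact le_max_right _ _
  -- upper bound
  have hQub : ∀ t ω, Q t ω ≤ t * C := by
    intro t ω
    induction t with
    | zero => simp [hQ0]
    | succ t ih =>
      rw [hQ t ω]
      have hb := (hB (t+1) ω).2
      have hDC : D - α ≤ C := le_max_left _ _
      have h1 : Q t ω + B (t+1) ω - α ≤ (t+1 : ℕ) * C := by push_cast; nlinarith
      have h2 : (0:ℝ) ≤ (t+1 : ℕ) * C := by positivity
      exact max_le h1 h2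
  -- lower bound (Lindley)
  have hQlb : ∀ T ω, S T ω - T * α ≤ Q T ω := by
    intro T ω
    induction T with
    | zero => simp [hQ0, hSdef]
    | succ T ih =>
      rw [hQ T ω]
      have hs : S (T+1) ω = S T ω + B (T+1) ω := by
        simp only [hSdef]
        rw [Finset.sum_Icc_succ_top (by omega : 1 ≤ T + 1)]
      refine le_max_of_le_left ?_
      rw [hs]; push_cast; linarith
  -- Lindley upper bound: Q T ≤ f T - f s for some s ≤ T
  have hlin : ∀ ω T, ∃ s ≤ T, Q T ω ≤ (S T ω - T * α) - (S s ω - s * α) := by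
    intro ω T
    induction T with
    | zero => exact ⟨0, le_refl _, by simp [hQ0]⟩
    | succ T ih =>
      obtain ⟨s, hsT, hqs⟩ := ih
      have hs : S (T+1) ω = S T ω + B (T+1) ω := by
        simp only [hSdef]
        rw [Finset.sum_Icc_succ_top (by omega : 1 ≤ T + 1)]
      rcases le_or_gt (Q T ω + B (T+1) ω - α) 0 with h | h
      · refine ⟨T+1, le_refl _, ?_⟩
        rw [hQ T ω, max_eq_right h]
        simp
      · refine ⟨s, le_trans hsT (Nat.le_succ T), ?_⟩
        rw [hQ T ω, max_eq_left h.le, hs]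
        push_cast
        linarith
  -- integrability
  have hint : ∀ T, Integrable (Q T) μ := by
    intro T
    refine Integrable.mono' (integrable_const ((T:ℝ) * C)) (hQm T).aestronglyMeasurable ?_
    filter_upwards with ω
    rw [Real.norm_eq_abs, abs_of_nonneg (hQnn T ω)]
    exact hQub T ω
  constructor
  · -- stability → a.s. limsup ≤ α
    intro h
    set F : ℕ → Ω → ENNReal := fun T ω => ENNReal.ofReal (Q T ω / T) with hF
    have hFm : ∀ T, Measurable (F T) := fun T =>
      ((hQm T).div_const _).ennreal_ofReal
    have hFl : ∀ T, ∫⁻ ω, F T ω ∂μ = ENNReal.ofReal ((∫ ω, Q T ω ∂μ) / T) := by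
      intro T
      rw [← MeasureTheory.integral_div]
      exact (ofReal_integral_eq_lintegral_ofReal ((hint T).div_const _)
        (Filter.Eventually.of_forall fun ω => div_nonneg (hQnn T ω) (Nat.cast_nonneg T))).symm
    have hFt : Tendsto (fun T => ∫⁻ ω, F T ω ∂μ) atTop (nhds 0) := by
      have := ENNReal.tendsto_ofReal h
      rw [ENNReal.ofReal_zero] at this
      simpa only [hFl] using this
    have hliminf0 : ∫⁻ ω, liminf (fun T => F T ω) atTop ∂μ = 0 := by
      have h1 := MeasureTheory.lintegral_liminf_le hFm (μ := μ) (u := atTop)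
      rw [hFt.liminf_eq] at h1
      exact le_antisymm h1 zero_le
    have hae : ∀ᵐ ω ∂μ, liminf (fun T => F T ω) atTop = 0 := by
      have := (MeasureTheory.lintegral_eq_zero_iff
        (Measurable.liminf hFm)).mp hliminf0
      filter_upwards [this] with ω hω using hω
    filter_upwards [hconv, hae] with ω hω hl0
    obtain ⟨L, hL⟩ := hω
    rw [hL.limsup_eq]
    by_contra hcon
    push_neg at hcon
    -- eventually Q T/T ≥ (L-α)/2 > 0
    have hev : ∀ᶠ T : ℕ in atTop, ENNReal.ofReal ((L - α)/2) ≤ F T ω := by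
      have h1 : Tendsto (fun T : ℕ => S T ω / T - α) atTop (nhds (L - α)) :=
        hL.sub_const α
      have h2 : ∀ᶠ T : ℕ in atTop, (L - α)/2 < S T ω / T - α :=
        h1.eventually_const_lt (by linarith)
      filter_upwards [h2, eventually_ge_atTop 1] with T hT hT1
      have hTp : (0:ℝ) < T := by exact_mod_cast hT1
      have h3 : S T ω / T - α ≤ Q T ω / T := by
        rw [div_sub' (ne_of_gt hTp), div_le_div_iff_of_pos_right hTp]
        · linarith [hQlb T ω]
      exact ENNReal.ofReal_le_ofReal (by linarith)
    have h5 : ENNReal.ofReal ((L - α)/2) ≤ liminf (fun T => F T ω) atTop :=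
      le_liminf_of_le (by isBoundedDefault) hev
    rw [hl0] at h5
    have := ENNReal.ofReal_eq_zero.mp (le_antisymm h5 zero_le)
    linarith
  · -- a.s. limsup ≤ α → stability
    intro h
    have heq : (fun T : ℕ => (∫ ω, Q T ω ∂μ) / (T : ℝ))
        = fun T : ℕ => ∫ ω, Q T ω / T ∂μ := by
      funext T
      rw [MeasureTheory.integral_div]
    rw [heq]
    have h0 : (0:ℝ) = ∫ (_ : Ω), (0:ℝ) ∂μ := by simp
    rw [h0]
    apply MeasureTheory.tendsto_integral_of_dominated_convergence (fun _ => C)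
    · exact fun T => ((hQm T).div_const _).aestronglyMeasurable
    · exact integrable_const C
    · intro T
      filter_upwards with ω
      rw [Real.norm_eq_abs, abs_of_nonneg (div_nonneg (hQnn T ω) (Nat.cast_nonneg T))]
      rcases Nat.eq_zero_or_pos T with hT | hT
      · simp [hT, hCnn]
      · have hTp : (0:ℝ) < T := by exact_mod_cast hT
        rw [div_le_iff₀ hTp]
        calc Q T ω ≤ T * C := hQub T ω
        _ = C * T := by ring
    · filter_upwards [hconv, h] with ω hω hls
      obtain ⟨L, hL⟩ := hω
      have hLα : L ≤ α := by rwa [hL.limsup_eq] at hls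
      refine pathwise_tendsto (fun T => Q T ω) (fun T => S T ω - T * α) α L
        (fun T => hQnn T ω) (hlin ω) ?_ hLα
      have heq2 : (fun T : ℕ => (S T ω - T * α) / T + α)
          =ᶠ[atTop] fun T : ℕ => S T ω / T := by
        filter_upwards [eventually_ge_atTop 1] with T hT1
        have hTp : (0:ℝ) < T := by exact_mod_cast hT1
        field_simp
        ring
      exact Tendsto.congr' heq2.symm hL
end
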